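/- Let G = (E, V) be a random tree with i.i.d. offspring whose offspring distribution has finite expectation. Then almost surely there exist M ≥ 1 and a family (G_i)_{i ∈ ℕ} of pairwise vertex-disjoint finite subtrees G_i = (E_i, V_i) of G with V = ⋃_{i ∈ ℕ} V_i and sup_{i ∈ ℕ} max_{x ∈ max(V_i)} off(x) ≤ M, where max(V_i) := {x ∈ V_i : every son of x in G lies outside V_i}. -/

import Mathlib

/- Common setup: the Hilbert space ℓ²(V), the subspace `C_c` of finitely supported
   functions, essential self-adjointness and deficiency indices for `LinearPMap`s. -/

noncomputable section

open scoped ENNReal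

/-- The Hilbert space ℓ²(V) with complex coefficients. -/
abbrev l2 (V : Type*) := lp (fun _ : V => ℂ) 2

/-- The dense subspace `C_c(G)` of finitely supported functions in ℓ²(V). -/
def Cc (V : Type*) : Submodule ℂ (l2 V) where
  carrier := {f | (Function.support (⇑f : V → ℂ)).Finite}
  add_mem' := by
    intro f g hf hg
    exact ((hf.union hg).subset (by rw [lp.coeFn_add]; exact Function.support_add _ _))
  zero_mem' := by
    have h0 : (Function.support (⇑(0 : l2 V) : V → ℂ)) = ∅ := by
      ext x
      simp only [Set.mem_empty_iff_false, iff_false, Function.mem_support, not_not]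
      exact congrFun (lp.coeFn_zero _ _) x
    simp only [Set.mem_setOf_eq, h0, Set.finite_empty]
  smul_mem' := by
    intro c f hf
    refine hf.subset ?_
    intro x hx
    simp only [Function.mem_support, lp.coeFn_smul, Pi.smul_apply, smul_eq_mul] at hx ⊢
    intro h0
    exact hx (by rw [h0, mul_zero])

/-- A densely defined operator is essentially self-adjoint if it is closable
and its closure is self-adjoint. -/
def IsEssentiallySelfAdjoint {H : Type*} [NormedAddCommGroup H] [InnerProductSpace ℂ H]
    [CompleteSpace H] (T : H →ₗ.[ℂ] H) : Prop :=
  T.IsClosable ∧ IsSelfAdjoint T.closure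

/-- The (random) vertex set of the random tree with i.i.d. offspring `X`:
words `(w₁, …, wₙ)` over `ℕ \ {0}` such that `w_{m+1} ≤ X_{(w₁, …, w_m)}`. -/
def randomTreeVertices {Ω : Type*} (X : List ℕ → Ω → ℕ) (ω : Ω) : Set (List ℕ) :=
  {w | ∀ (u : List ℕ) (a : ℕ), u ++ [a] <+: w → 1 ≤ a ∧ a ≤ X u ω}

/-- The (random) tree graph on words: two vertices are adjacent exactly when one is
the other extended by a single letter. -/
def randomTreeGraph {Ω : Type*} (X : List ℕ → Ω → ℕ) (ω : Ω) : SimpleGraph (List ℕ) where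
  Adj v w := (v ∈ randomTreeVertices X ω ∧ w ∈ randomTreeVertices X ω) ∧
    ((∃ a : ℕ, w = v ++ [a]) ∨ (∃ a : ℕ, v = w ++ [a]))
  symm := by
    constructor
    intro v w h
    exact ⟨⟨h.1.2, h.1.1⟩, h.2.symm⟩
  loopless := by
    constructor
    intro v h
    rcases h.2 with ⟨a, ha⟩ | ⟨a, ha⟩ <;>
      simpa using congrArg List.length ha

/-- The number of sons of a vertex `x` in the random tree. -/
noncomputable def randomTreeOff {Ω : Type*} (X : List ℕ → Ω → ℕ) (ω : Ω) (x : List ℕ) : ℕ :=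
  Nat.card {a : ℕ | x ++ [a] ∈ randomTreeVertices X ω}

open MeasureTheory

section Stmt14Aux

/-- indicator: letter `a` is a valid child index of a vertex with `n` sons, and `n > M`. -/
def stmtIa (M a n : ℕ) : ℝ≥0∞ := if 1 ≤ a ∧ a ≤ n ∧ M < n then 1 else 0

/-- product of indicators along the path `w ++ t` below `w`. -/
def stmtCF (M : ℕ) (g : List ℕ → ℕ) : List ℕ → List ℕ → ℝ≥0∞
  | _, [] => 1
  | w, a :: t => stmtIa M a (g w) * stmtCF M g (w ++ [a]) t

/-- the words whose value is used in `stmtCF M g w t`. -/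
def stmtCoords : List ℕ → List ℕ → Finset (List ℕ)
  | _, [] => ∅
  | w, a :: t => insert w (stmtCoords (w ++ [a]) t)

@[simp] lemma stmtCF_nil (M : ℕ) (g : List ℕ → ℕ) (w : List ℕ) : stmtCF M g w [] = 1 := rfl

@[simp] lemma stmtCF_cons (M : ℕ) (g : List ℕ → ℕ) (w : List ℕ) (a : ℕ) (t : List ℕ) :
    stmtCF M g w (a :: t) = stmtIa M a (g w) * stmtCF M g (w ++ [a]) t := rfl

variable {Ω : Type*} [MeasurableSpace Ω]

/-- the "bad cluster" rooted at `v` : descendants of `v` in the tree all of whose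
strict ancestors (at or above `v`) have more than `M` sons. -/
def stmtCluster (M : ℕ) (X : List ℕ → Ω → ℕ) (ω : Ω) (v : List ℕ) : Set (List ℕ) :=
  {w | v <+: w ∧ w ∈ randomTreeVertices X ω ∧
    ∀ u, v <+: u → u <+: w → u ≠ w → M < X u ω}

def stmtS (M : ℕ) (X : List ℕ → Ω → ℕ) (v : List ℕ) (k : ℕ) (ω : Ω) : ℝ≥0∞ :=
  ∑' t : List.Vector ℕ k, stmtCF M (fun z => X z ω) v t.1

def stmtP (P : Measure Ω) (X : List ℕ → Ω → ℕ) (M a : ℕ) : ℝ≥0∞ :=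
  ∫⁻ ω, stmtIa M a (X [] ω) ∂P

def stmtQ (P : Measure Ω) (X : List ℕ → Ω → ℕ) (M : ℕ) : ℝ≥0∞ :=
  ∑' a : ℕ, stmtP P X M a

lemma mem_coords_length {z : List ℕ} : ∀ {t w : List ℕ}, z ∈ stmtCoords w t →
    w.length ≤ z.length := by
  intro t
  induction t with
  | nil => intro w h; simp [stmtCoords] at h
  | cons a t ih =>
    intro w h
    rcases Finset.mem_insert.1 h with rfl | h
    · exact le_rfl
    · have := ih h
      simp only [List.length_append, List.length_cons, List.length_nil] at this
      omega

lemma stmtCF_congr {M : ℕ} : ∀ {t w : List ℕ} {g g' : List ℕ → ℕ},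
    (∀ z ∈ stmtCoords w t, g z = g' z) → stmtCF M g w t = stmtCF M g' w t := by
  intro t
  induction t with
  | nil => intro w g g' _; rfl
  | cons a t ih =>
    intro w g g' h
    have hw : g w = g' w := h w (Finset.mem_insert_self _ _)
    have ht : stmtCF M g (w ++ [a]) t = stmtCF M g' (w ++ [a]) t :=
      ih fun z hz => h z (Finset.mem_insert_of_mem hz)
    rw [stmtCF_cons, stmtCF_cons, hw, ht]

lemma measurable_stmtCF {M : ℕ} : ∀ (t w : List ℕ),
    Measurable (fun g : List ℕ → ℕ => stmtCF M g w t) := by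
  intro t
  induction t with
  | nil => intro w; simp only [stmtCF_nil]; exact measurable_const
  | cons a t ih =>
    intro w
    have h1 : Measurable (fun g : List ℕ → ℕ => stmtIa M a (g w)) :=
      (Measurable.of_discrete (f := stmtIa M a)).comp (measurable_pi_apply w)
    simp only [stmtCF_cons]; exact (h1.mul (ih (w ++ [a])))

lemma measurable_stmtCF_omega {M : ℕ} (X : List ℕ → Ω → ℕ) (hmeas : ∀ w, Measurable (X w))
    (t w : List ℕ) : Measurable (fun ω => stmtCF M (fun z => X z ω) w t) :=
  (measurable_stmtCF t w).comp (measurable_pi_lambda _ hmeas)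

lemma measurable_stmtS {M : ℕ} (X : List ℕ → Ω → ℕ) (hmeas : ∀ w, Measurable (X w))
    (v : List ℕ) (k : ℕ) : Measurable (stmtS M X v k) :=
  Measurable.ennreal_tsum fun t => measurable_stmtCF_omega X hmeas t.1 v

end Stmt14Aux

section Stmt14Prob

open ProbabilityTheory

variable {Ω : Type*} [MeasurableSpace Ω] (P : Measure Ω) [IsProbabilityMeasure P]
  (X : List ℕ → Ω → ℕ)

lemma lintegral_stmtCF (hmeas : ∀ w, Measurable (X w))
    (hindep : ProbabilityTheory.iIndepFun X P)
    (hident : ∀ w, ProbabilityTheory.IdentDistrib (X w) (X []) P P)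
    {M : ℕ} : ∀ (t w : List ℕ),
    ∫⁻ ω, stmtCF M (fun z => X z ω) w t ∂P = ((t.map (stmtP P X M)).prod) := by
  intro t
  induction t with
  | nil => intro w; simp
  | cons a t ih =>
    intro w
    have hwmem : w ∉ stmtCoords (w ++ [a]) t := by
      intro h
      have := mem_coords_length h
      simp at this
    set Sf := stmtCoords (w ++ [a]) t with hSf
    have hdisj : Disjoint ({w} : Finset (List ℕ)) Sf := by
      simp [Finset.disjoint_left, hwmem]
    have hbase : IndepFun (fun ω (i : {x // x ∈ ({w} : Finset (List ℕ))}) => X i.1 ω)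
        (fun ω (i : {x // x ∈ Sf}) => X i.1 ω) P := hindep.indepFun_finset {w} Sf hdisj hmeas
    have hφ : Measurable (fun h : ({x // x ∈ ({w} : Finset (List ℕ))} → ℕ) =>
        stmtIa M a (h ⟨w, Finset.mem_singleton_self w⟩)) :=
      (Measurable.of_discrete (f := stmtIa M a)).comp (measurable_pi_apply _)
    have hψmeas : Measurable (fun h : ({x // x ∈ Sf} → ℕ) =>
        stmtCF M (fun z => if hz : z ∈ Sf then h ⟨z, hz⟩ else 0) (w ++ [a]) t) := by
      refine (measurable_stmtCF t (w ++ [a])).comp ?_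
      refine measurable_pi_lambda _ fun z => ?_
      by_cases hz : z ∈ Sf
      · simpa [hz] using measurable_pi_apply (⟨z, hz⟩ : {x // x ∈ Sf})
      · simpa [hz] using measurable_const
    have e1 : (fun ω => stmtIa M a (X w ω)) =
        (fun h : ({x // x ∈ ({w} : Finset (List ℕ))} → ℕ) =>
          stmtIa M a (h ⟨w, Finset.mem_singleton_self w⟩)) ∘
        (fun ω (i : {x // x ∈ ({w} : Finset (List ℕ))}) => X i.1 ω) := rfl
    have e2 : (fun ω => stmtCF M (fun z => X z ω) (w ++ [a]) t) =
        (fun h : ({x // x ∈ Sf} → ℕ) =>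
          stmtCF M (fun z => if hz : z ∈ Sf then h ⟨z, hz⟩ else 0) (w ++ [a]) t) ∘
        (fun ω (i : {x // x ∈ Sf}) => X i.1 ω) := by
      funext ω
      exact stmtCF_congr fun z hz => by have hz' : z ∈ Sf := hz; simp [hz']
    have hindep2 : IndepFun (fun ω => stmtIa M a (X w ω))
        (fun ω => stmtCF M (fun z => X z ω) (w ++ [a]) t) P := by
      rw [e1, e2]; exact hbase.comp hφ hψmeas
    have hmul := lintegral_mul_eq_lintegral_mul_lintegral_of_indepFun
      ((Measurable.of_discrete (f := stmtIa M a)).comp (hmeas w))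
      (measurable_stmtCF_omega X hmeas t (w ++ [a])) hindep2
    have hid : ∫⁻ ω, stmtIa M a (X w ω) ∂P = stmtP P X M a := by
      have := ((hident w).comp (Measurable.of_discrete (f := stmtIa M a))).lintegral_eq
      simpa [Function.comp_def, stmtP] using this
    calc ∫⁻ ω, stmtCF M (fun z => X z ω) w (a :: t) ∂P
        = ∫⁻ ω, ((fun ω => stmtIa M a (X w ω)) *
            (fun ω => stmtCF M (fun z => X z ω) (w ++ [a]) t)) ω ∂P := rfl
      _ = (∫⁻ ω, stmtIa M a (X w ω) ∂P) *
            ∫⁻ ω, stmtCF M (fun z => X z ω) (w ++ [a]) t ∂P := hmul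
      _ = ((a :: t).map (stmtP P X M)).prod := by
          rw [hid, ih (w ++ [a])]; simp

lemma tsum_prod_pow (p : ℕ → ℝ≥0∞) : ∀ k : ℕ,
    ∑' f : Fin k → ℕ, ∏ i, p (f i) = (∑' a : ℕ, p a) ^ k := by
  intro k
  induction k with
  | zero =>
    rw [pow_zero]
    rw [tsum_eq_single (default : Fin 0 → ℕ) (fun b hb => absurd (Subsingleton.elim b default) hb)]
    simp
  | succ k ih =>
    have he := Equiv.tsum_eq (Fin.consEquiv (fun _ : Fin (k+1) => ℕ))
      (fun f : Fin (k+1) → ℕ => ∏ i, p (f i))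
    rw [← he, ENNReal.tsum_prod']
    have h1 : ∀ (a : ℕ) (f : Fin k → ℕ),
        (∏ i, p ((Fin.consEquiv (fun _ : Fin (k+1) => ℕ)) (a, f) i))
        = p a * ∏ i, p (f i) := by
      intro a f
      rw [show ((Fin.consEquiv (fun _ : Fin (k+1) => ℕ)) (a, f)) = Fin.cons a f from rfl,
        Fin.prod_univ_succ]
      simp
    calc ∑' (a : ℕ) (f : Fin k → ℕ), ∏ i, p ((Fin.consEquiv (fun _ : Fin (k+1) => ℕ)) (a, f) i)
        = ∑' (a : ℕ) (f : Fin k → ℕ), p a * ∏ i, p (f i) := by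
          exact tsum_congr fun a => tsum_congr fun f => h1 a f
      _ = ∑' (a : ℕ), p a * ∑' f : Fin k → ℕ, ∏ i, p (f i) := by
          exact tsum_congr fun a => ENNReal.tsum_mul_left
      _ = (∑' a : ℕ, p a) ^ (k + 1) := by
          rw [ih, ENNReal.tsum_mul_right, pow_succ]; ring

lemma lintegral_stmtS (hmeas : ∀ w, Measurable (X w))
    (hindep : ProbabilityTheory.iIndepFun X P)
    (hident : ∀ w, ProbabilityTheory.IdentDistrib (X w) (X []) P P)
    {M : ℕ} (v : List ℕ) (k : ℕ) :
    ∫⁻ ω, stmtS M X v k ω ∂P = (stmtQ P X M) ^ k := by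
  show ∫⁻ ω, ∑' t : List.Vector ℕ k, stmtCF M (fun z => X z ω) v t.1 ∂P = _
  have hswap := lintegral_tsum (μ := P)
    (f := fun (t : List.Vector ℕ k) (ω : Ω) => stmtCF M (fun z => X z ω) v t.1)
    (fun t => (measurable_stmtCF_omega X hmeas t.1 v).aemeasurable)
  rw [hswap]
  have h1 : ∀ t : List.Vector ℕ k, ∫⁻ ω, stmtCF M (fun z => X z ω) v t.1 ∂P
      = ((t.1.map (stmtP P X M)).prod) := fun t => lintegral_stmtCF P X hmeas hindep hident t.1 v
  rw [tsum_congr h1]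
  have he := Equiv.tsum_eq (Equiv.vectorEquivFin ℕ k).symm
    (fun t : List.Vector ℕ k => ((t.1.map (stmtP P X M)).prod))
  rw [← he]
  have h2 : ∀ f : Fin k → ℕ, ((((Equiv.vectorEquivFin ℕ k).symm f).1.map (stmtP P X M)).prod)
      = ∏ i, stmtP P X M (f i) := by
    intro f
    have h3 : ((Equiv.vectorEquivFin ℕ k).symm f).1 = List.ofFn f := List.Vector.toList_ofFn f
    rw [h3, List.map_ofFn, List.prod_ofFn]
    rfl
  rw [tsum_congr h2, tsum_prod_pow]
  rfl

lemma tsum_stmtIa (M n : ℕ) : ∑' a : ℕ, stmtIa M a n = if M < n then (n : ℝ≥0∞) else 0 := by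
  by_cases h : M < n
  · rw [if_pos h]
    have h1 : ∀ a : ℕ, stmtIa M a n = if a ∈ Finset.Icc 1 n then (1:ℝ≥0∞) else 0 := by
      intro a; simp [stmtIa, Finset.mem_Icc, h]
    calc ∑' a : ℕ, stmtIa M a n
        = ∑' a : ℕ, if a ∈ Finset.Icc 1 n then (1:ℝ≥0∞) else 0 := tsum_congr h1
      _ = ∑ a ∈ Finset.Icc 1 n, if a ∈ Finset.Icc 1 n then (1:ℝ≥0∞) else 0 :=
          tsum_eq_sum (fun a ha => if_neg ha)
      _ = ∑ _a ∈ Finset.Icc 1 n, (1:ℝ≥0∞) := Finset.sum_congr rfl (fun a ha => if_pos ha)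
      _ = (n : ℝ≥0∞) := by rw [Finset.sum_const, Nat.card_Icc]; simp
  · simp [stmtIa, h]

lemma stmtQ_eq (hmeas : ∀ w, Measurable (X w)) (M : ℕ) :
    stmtQ P X M = ∫⁻ ω, (fun n => if M < n then (n : ℝ≥0∞) else 0) (X [] ω) ∂P := by
  rw [stmtQ]
  have hswap := lintegral_tsum (μ := P)
    (f := fun (a : ℕ) (ω : Ω) => stmtIa M a (X [] ω))
    (fun a => ((Measurable.of_discrete (f := stmtIa M a)).comp (hmeas [])).aemeasurable)
  have h1 : ∀ a : ℕ, stmtP P X M a = ∫⁻ ω, stmtIa M a (X [] ω) ∂P := fun _ => rfl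
  calc ∑' a : ℕ, stmtP P X M a
      = ∑' a : ℕ, ∫⁻ ω, stmtIa M a (X [] ω) ∂P := tsum_congr h1
    _ = ∫⁻ ω, ∑' a : ℕ, stmtIa M a (X [] ω) ∂P := by simpa using hswap.symm
    _ = _ := lintegral_congr fun ω => tsum_stmtIa M (X [] ω)

lemma exists_stmtM (hmeas : ∀ w, Measurable (X w))
    (hexp : (∫⁻ ω, (X [] ω : ℝ≥0∞) ∂P) < ⊤) :
    ∃ M : ℕ, 1 ≤ M ∧ stmtQ P X M < 1 := by
  set Y : ℕ → Ω → ℝ≥0∞ := fun M ω => (fun n => if M < n then (n : ℝ≥0∞) else 0) (X [] ω) with hY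
  have hYmeas : ∀ M, Measurable (Y M) := fun M =>
    (Measurable.of_discrete (f := fun n : ℕ => if M < n then (n : ℝ≥0∞) else 0)).comp (hmeas [])
  have hanti : Antitone Y := by
    intro M M' h ω
    simp only [hY]
    split_ifs with h1 h2
    · exact le_refl _
    · exact absurd (lt_of_le_of_lt h h1) h2
    · exact zero_le
    · exact le_refl _
  have hle : ∀ M ω, Y M ω ≤ (X [] ω : ℝ≥0∞) := by
    intro M ω; simp only [hY]; split_ifs <;> simp
  have h0 : ∫⁻ ω, Y 0 ω ∂P ≠ ⊤ :=
    ((lintegral_mono (hle 0)).trans_lt hexp).ne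
  have hiInf : ∀ ω, ⨅ M, Y M ω = 0 := by
    intro ω
    refine le_antisymm ((iInf_le _ (X [] ω)).trans ?_) zero_le
    simp [hY]
  have hkey : (⨅ M, ∫⁻ ω, Y M ω ∂P) = 0 := by
    rw [← MeasureTheory.lintegral_iInf hYmeas hanti h0]
    simp only [hiInf]
    exact lintegral_zero
  have : ∃ M0, ∫⁻ ω, Y M0 ω ∂P < 1 := by
    by_contra h
    push_neg at h
    have : (1 : ℝ≥0∞) ≤ ⨅ M, ∫⁻ ω, Y M ω ∂P := le_iInf h
    rw [hkey] at this
    exact absurd this (by norm_num)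
  obtain ⟨M0, hM0⟩ := this
  refine ⟨M0 + 1, le_add_self, ?_⟩
  rw [stmtQ_eq P X hmeas]
  exact lt_of_le_of_lt (lintegral_mono (hanti (Nat.le_succ M0))) hM0

/-! ### Deterministic lemmas about the random tree for a fixed sample -/

lemma stmtV_prefix_closed {X : List ℕ → Ω → ℕ} {ω : Ω} {u w : List ℕ}
    (hw : w ∈ randomTreeVertices X ω) (h : u <+: w) : u ∈ randomTreeVertices X ω :=
  fun u' a ha => hw u' a (ha.trans h)

lemma stmt_nil_mem {X : List ℕ → Ω → ℕ} {ω : Ω} : [] ∈ randomTreeVertices X ω := by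
  intro u a ha
  rw [List.prefix_nil] at ha
  simp at ha

lemma stmt_finite_level (X : List ℕ → Ω → ℕ) (ω : Ω) :
    ∀ n, {w | w ∈ randomTreeVertices X ω ∧ w.length = n}.Finite := by
  intro n
  induction n with
  | zero =>
    refine (Set.finite_singleton []).subset fun w hw => ?_
    simpa using List.length_eq_zero_iff.mp hw.2
  | succ n ih =>
    have hsub : {w | w ∈ randomTreeVertices X ω ∧ w.length = n + 1} ⊆
        ⋃ u ∈ {w | w ∈ randomTreeVertices X ω ∧ w.length = n},
          ⋃ a ∈ Set.Icc 1 (X u ω), {u ++ [a]} := by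
      rintro w ⟨hwV, hlen⟩
      rcases w.eq_nil_or_concat with rfl | ⟨u, b, rfl⟩
      · simp at hlen
      · rw [List.concat_eq_append] at *
        have huV : u ∈ randomTreeVertices X ω := stmtV_prefix_closed hwV (List.prefix_append _ _)
        have hb : 1 ≤ b ∧ b ≤ X u ω := hwV u b (List.prefix_refl _)
        have hulen : u.length = n := by simpa using hlen
        simp only [Set.mem_iUnion]
        exact ⟨u, ⟨huV, hulen⟩, b, Set.mem_Icc.mpr hb, rfl⟩
    exact (ih.biUnion fun u _ => (Set.finite_Icc 1 (X u ω)).biUnion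
      fun a _ => Set.finite_singleton _).subset hsub

lemma stmtCluster_prefix_closed {X : List ℕ → Ω → ℕ} {ω : Ω} {M : ℕ} {v u w : List ℕ}
    (hw : w ∈ stmtCluster M X ω v) (hvu : v <+: u) (huw : u <+: w) :
    u ∈ stmtCluster M X ω v := by
  refine ⟨hvu, stmtV_prefix_closed hw.2.1 huw, fun z hvz hzu hzne => ?_⟩
  refine hw.2.2 z hvz (hzu.trans huw) ?_
  intro h
  subst h
  exact hzne (huw.eq_of_length (le_antisymm huw.length_le hzu.length_le)).symm

lemma stmt_mem_cluster_self {X : List ℕ → Ω → ℕ} {ω : Ω} {M : ℕ} {v : List ℕ}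
    (hv : v ∈ randomTreeVertices X ω) : v ∈ stmtCluster M X ω v :=
  ⟨List.prefix_refl v, hv, fun u hvu huv hne =>
    absurd (huv.eq_of_length (le_antisymm huv.length_le hvu.length_le)) hne⟩

lemma stmtCluster_stmtCF {X : List ℕ → Ω → ℕ} {ω : Ω} {M : ℕ} :
    ∀ (t v : List ℕ), v ++ t ∈ stmtCluster M X ω v → stmtCF M (fun z => X z ω) v t = 1 := by
  intro t
  induction t with
  | nil => intro v _; rfl
  | cons a t ih =>
    intro v h
    have hne : v ≠ v ++ a :: t := by
      intro he
      have := congrArg List.length he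
      simp at this
    have hbad : M < X v ω := h.2.2 v (List.prefix_refl v) ⟨a :: t, rfl⟩ hne
    have hmem : 1 ≤ a ∧ a ≤ X v ω := h.2.1 v a ⟨t, by simp⟩
    have hI : stmtIa M a (X v ω) = 1 := if_pos ⟨hmem.1, hmem.2, hbad⟩
    have hnext : (v ++ [a]) ++ t ∈ stmtCluster M X ω (v ++ [a]) := by
      have he : (v ++ [a]) ++ t = v ++ a :: t := by simp
      rw [he]
      refine ⟨⟨t, by simp⟩, h.2.1, fun u hu1 hu2 hu3 => ?_⟩
      exact h.2.2 u (List.IsPrefix.trans (List.prefix_append v ([a])) hu1) hu2 hu3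
    rw [stmtCF_cons, hI, ih (v ++ [a]) hnext, one_mul]

lemma ae_stmtCluster_finite (hmeas : ∀ w, Measurable (X w))
    (hindep : ProbabilityTheory.iIndepFun X P)
    (hident : ∀ w, ProbabilityTheory.IdentDistrib (X w) (X []) P P)
    {M : ℕ} (hq : stmtQ P X M < 1) :
    ∀ᵐ ω ∂P, ∀ v : List ℕ, (stmtCluster M X ω v).Finite := by
  rw [MeasureTheory.ae_all_iff]
  intro v
  have hA : P (⋂ k : ℕ, {ω | 1 ≤ stmtS M X v k ω}) = 0 := by
    have hle : ∀ k : ℕ, P (⋂ k' : ℕ, {ω | 1 ≤ stmtS M X v k' ω}) ≤ (stmtQ P X M) ^ k := by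
      intro k
      refine le_trans (measure_mono (Set.iInter_subset _ k)) ?_
      have hmar := MeasureTheory.mul_meas_ge_le_lintegral₀ (μ := P)
        (measurable_stmtS (M := M) X hmeas v k).aemeasurable 1
      rw [one_mul] at hmar
      exact hmar.trans_eq (lintegral_stmtS P X hmeas hindep hident v k)
    have htend := ENNReal.tendsto_pow_atTop_nhds_zero_of_lt_one hq
    have hfin := ge_of_tendsto htend (Filter.Eventually.of_forall hle)
    exact le_antisymm hfin zero_le
  rw [MeasureTheory.ae_iff]
  refine measure_mono_null ?_ hA
  intro ω hω
  simp only [Set.mem_setOf_eq] at hω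
  rw [Set.mem_iInter]
  intro k
  show 1 ≤ stmtS M X v k ω
  have hex : ∃ w ∈ stmtCluster M X ω v, w.length = v.length + k := by
    by_contra hno
    push_neg at hno
    apply hω
    have hsub : stmtCluster M X ω v ⊆ ⋃ n ∈ Set.Iio (v.length + k),
        {w | w ∈ randomTreeVertices X ω ∧ w.length = n} := by
      intro w hw
      have hlenlt : w.length < v.length + k := by
        rcases lt_or_ge w.length (v.length + k) with hlt | hge
        · exact hlt
        · exfalso
          have hutake : w.take (v.length + k) <+: w := List.take_prefix _ _
          have hulen : (w.take (v.length + k)).length = v.length + k := by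
            rw [List.length_take]; omega
          have hvu : v <+: w.take (v.length + k) :=
            List.prefix_of_prefix_length_le hw.1 hutake (by omega)
          exact hno _ (stmtCluster_prefix_closed hw hvu hutake) hulen
      simp only [Set.mem_iUnion]
      exact ⟨w.length, hlenlt, hw.2.1, rfl⟩
    exact ((Set.finite_Iio (v.length + k)).biUnion
      (fun n _ => stmt_finite_level X ω n)).subset hsub
  obtain ⟨w, hw, hlen⟩ := hex
  obtain ⟨t, rfl⟩ := hw.1
  have htlen : t.length = k := by simp at hlen; omega
  have hc := stmtCluster_stmtCF t v hw
  calc (1:ℝ≥0∞) = stmtCF M (fun z => X z ω) v (⟨t, htlen⟩ : List.Vector ℕ k).1 := hc.symm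
    _ ≤ stmtS M X v k ω := ENNReal.le_tsum _

/-! ### More deterministic lemmas -/

lemma stmt_off_eq {X : List ℕ → Ω → ℕ} {ω : Ω} {x : List ℕ}
    (hx : x ∈ randomTreeVertices X ω) : randomTreeOff X ω x = X x ω := by
  have hset : {a : ℕ | x ++ [a] ∈ randomTreeVertices X ω} = Set.Icc 1 (X x ω) := by
    ext a
    simp only [Set.mem_setOf_eq, Set.mem_Icc]
    constructor
    · intro ha
      exact ha x a (List.prefix_refl _)
    · intro ha u b hub
      rcases List.prefix_concat_iff.mp hub with heq | hpre
      · have hl : u.length = x.length := by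
          have hll := congrArg List.length heq
          simp at hll; omega
        obtain ⟨h1, h2⟩ := List.append_inj heq hl
        obtain rfl : u = x := h1
        obtain rfl : b = a := by simpa using h2
        exact ha
      · exact hx u b hpre
  rw [randomTreeOff, hset, ← Finset.coe_Icc, Nat.card_coe_set_eq, Set.ncard_coe_finset,
    Nat.card_Icc]
  omega

lemma stmt_son_mem {X : List ℕ → Ω → ℕ} {ω : Ω} {x : List ℕ} {a : ℕ}
    (hx : x ∈ randomTreeVertices X ω) (h1 : 1 ≤ a) (h2 : a ≤ X x ω) :
    x ++ [a] ∈ randomTreeVertices X ω := by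
  intro u b hub
  rcases List.prefix_concat_iff.mp hub with heq | hpre
  · have hl : u.length = x.length := by
      have hll := congrArg List.length heq
      simp at hll; omega
    obtain ⟨h3, h4⟩ := List.append_inj heq hl
    obtain rfl : u = x := h3
    obtain rfl : b = a := by simpa using h4
    exact ⟨h1, h2⟩
  · exact hx u b hpre

lemma stmt_cluster_reachable {X : List ℕ → Ω → ℕ} {ω : Ω} {M : ℕ} {v : List ℕ}
    (hv : v ∈ stmtCluster M X ω v) :
    ∀ t (h : v ++ t ∈ stmtCluster M X ω v),
      ((randomTreeGraph X ω).induce (stmtCluster M X ω v)).Reachable ⟨v, hv⟩ ⟨v ++ t, h⟩ := by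
  intro t
  induction t using List.reverseRecOn with
  | nil =>
    intro h
    have he : (⟨v ++ [], h⟩ : stmtCluster M X ω v) = ⟨v, hv⟩ := Subtype.ext (by simp)
    rw [he]
  | append_singleton t b ih =>
    intro h
    have hpre : v ++ t <+: v ++ (t ++ [b]) := by
      rw [← List.append_assoc]; exact List.prefix_append _ _
    have h' : v ++ t ∈ stmtCluster M X ω v :=
      stmtCluster_prefix_closed h (List.prefix_append _ _) hpre
    have hadj : (randomTreeGraph X ω).Adj (v ++ t) (v ++ (t ++ [b])) := by
      refine ⟨⟨h'.2.1, h.2.1⟩, Or.inl ⟨b, ?_⟩⟩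
      rw [List.append_assoc]
    have hadj2 : ((randomTreeGraph X ω).induce (stmtCluster M X ω v)).Adj
        ⟨v ++ t, h'⟩ ⟨v ++ (t ++ [b]), h⟩ := by simpa using hadj
    exact (ih h').trans hadj2.reachable

/-- the root candidates: the empty word, and sons of vertices with at most `M` sons. -/
def stmtRt {Ω : Type*} (X : List ℕ → Ω → ℕ) (ω : Ω) (M : ℕ) (v : List ℕ) : Prop :=
  v ∈ randomTreeVertices X ω ∧ (v = [] ∨ ∃ u a, v = u ++ [a] ∧ X u ω ≤ M)

/-- the decomposition pieces. -/
def stmtVi {Ω : Type*} (X : List ℕ → Ω → ℕ) (ω : Ω) (M : ℕ) (i : ℕ) : Set (List ℕ) :=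
  {w | stmtRt X ω M (Denumerable.ofNat (List ℕ) i) ∧
    w ∈ stmtCluster M X ω (Denumerable.ofNat (List ℕ) i)}

lemma stmt14_det (X : List ℕ → Ω → ℕ) (ω : Ω) (M : ℕ) (hM : 1 ≤ M)
    (hfin : ∀ v, (stmtCluster M X ω v).Finite) :
    ∃ Vi : ℕ → Set (List ℕ),
      (∀ i, Vi i ⊆ randomTreeVertices X ω) ∧
      (∀ i j, i ≠ j → Disjoint (Vi i) (Vi j)) ∧
      (⋃ i, Vi i) = randomTreeVertices X ω ∧
      (∀ i, (Vi i).Finite) ∧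
      (∀ i, ((randomTreeGraph X ω).induce (Vi i)).Preconnected) ∧
      (∀ i, ∀ x ∈ Vi i,
        (∀ a : ℕ, x ++ [a] ∈ randomTreeVertices X ω → x ++ [a] ∉ Vi i) →
        randomTreeOff X ω x ≤ M) := by
  classical
  refine ⟨stmtVi X ω M, fun i w hw => hw.2.2.1, ?_, ?_, fun i => (hfin _).subset fun w hw => hw.2,
    ?_, ?_⟩
  · -- disjointness
    have key : ∀ v1 v2 w, stmtRt X ω M v2 → v1.length < v2.length →
        w ∈ stmtCluster M X ω v1 → w ∈ stmtCluster M X ω v2 → False := by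
      intro v1 v2 w hR2 hlen h1 h2
      rcases hR2.2 with rfl | ⟨u, a, rfl, hua⟩
      · simp at hlen
      · have huw : u <+: w := (List.prefix_append u ([a])).trans h2.1
        have hv1u : v1 <+: u := List.prefix_of_prefix_length_le h1.1 huw (by
          simp at hlen; omega)
        have hunw : u ≠ w := by
          intro he
          have hlw := h2.1.length_le
          rw [← he] at hlw
          simp at hlw
        exact absurd (h1.2.2 u hv1u huw hunw) (not_lt.mpr hua)
    intro i j hij
    rw [Set.disjoint_left]
    rintro w ⟨hRi, hci⟩ ⟨hRj, hcj⟩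
    have hne : Denumerable.ofNat (List ℕ) i ≠ Denumerable.ofNat (List ℕ) j := by
      intro h
      apply hij
      have he := congrArg Encodable.encode h
      rwa [Denumerable.encode_ofNat, Denumerable.encode_ofNat] at he
    rcases lt_trichotomy (Denumerable.ofNat (List ℕ) i).length
        (Denumerable.ofNat (List ℕ) j).length with h | h | h
    · exact key _ _ w hRj h hci hcj
    · exact hne ((List.prefix_of_prefix_length_le hci.1 hcj.1 h.le).eq_of_length h)
    · exact key _ _ w hRi h hcj hci
  · -- union
    ext w
    simp only [Set.mem_iUnion]
    constructor
    · rintro ⟨i, hw⟩; exact hw.2.2.1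
    · intro hw
      by_cases hex : ∃ u, u <+: w ∧ u ≠ w ∧ X u ω ≤ M
      · have hfinP : {u | u <+: w ∧ u ≠ w ∧ X u ω ≤ M}.Finite :=
          (w.inits.finite_toSet).subset (fun u hu => (List.mem_inits _ _).mpr hu.1)
        obtain ⟨u0, hu0, hmax⟩ := hfinP.exists_maximalFor List.length _ hex
        obtain ⟨t, hteq⟩ := hu0.1
        have htne : t ≠ [] := by
          rintro rfl
          exact hu0.2.1 (by simpa using hteq)
        obtain ⟨a, t', rfl⟩ : ∃ a t', t = a :: t' := by
          cases t with
          | nil => exact absurd rfl htne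
          | cons a t' => exact ⟨a, t', rfl⟩
        have hvw : u0 ++ [a] <+: w := ⟨t', by simpa using hteq⟩
        have hvV : u0 ++ [a] ∈ randomTreeVertices X ω := stmtV_prefix_closed hw hvw
        refine ⟨Encodable.encode (u0 ++ [a]), ?_⟩
        rw [stmtVi, Set.mem_setOf_eq, Denumerable.ofNat_encode]
        refine ⟨⟨hvV, Or.inr ⟨u0, a, rfl, hu0.2.2⟩⟩, hvw, hw, fun u hvu huw hunw => ?_⟩
        by_contra hbad
        push_neg at hbad
        have huP : u ∈ {u | u <+: w ∧ u ≠ w ∧ X u ω ≤ M} := ⟨huw, hunw, hbad⟩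
        have h1 : u0.length + 1 ≤ u.length := by
          have hh := hvu.length_le
          simp at hh; omega
        have h2 := hmax (j := u) huP (by omega)
        omega
      · push_neg at hex
        refine ⟨Encodable.encode ([] : List ℕ), ?_⟩
        rw [stmtVi, Set.mem_setOf_eq, Denumerable.ofNat_encode]
        exact ⟨⟨stmt_nil_mem, Or.inl rfl⟩, w.nil_prefix, hw,
          fun u _ huw hune => hex u huw hune⟩
  · -- preconnected
    intro i
    by_cases hR : stmtRt X ω M (Denumerable.ofNat (List ℕ) i)
    · have hvc : Denumerable.ofNat (List ℕ) i ∈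
          stmtCluster M X ω (Denumerable.ofNat (List ℕ) i) := stmt_mem_cluster_self hR.1
      have hVi : stmtVi X ω M i = stmtCluster M X ω (Denumerable.ofNat (List ℕ) i) :=
        Set.ext fun w => ⟨fun h => h.2, fun h => ⟨hR, h⟩⟩
      rw [hVi]
      rintro ⟨x, hx⟩ ⟨y, hy⟩
      obtain ⟨tx, rfl⟩ := hx.1
      obtain ⟨ty, rfl⟩ := hy.1
      exact (stmt_cluster_reachable hvc tx hx).symm.trans (stmt_cluster_reachable hvc ty hy)
    · rintro ⟨x, hx⟩
      exact absurd hx.1 hR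
  · -- offspring bound
    intro i x hx hsons
    have hxV : x ∈ randomTreeVertices X ω := hx.2.2.1
    rw [stmt_off_eq hxV]
    by_contra hgt
    push_neg at hgt
    have hsonV : x ++ [1] ∈ randomTreeVertices X ω := stmt_son_mem hxV le_rfl (by omega)
    refine hsons 1 hsonV ⟨hx.1, hx.2.1.trans (List.prefix_append x ([1])), hsonV,
      fun u hvu hu hune => ?_⟩
    rcases List.prefix_concat_iff.mp hu with heq | hpre
    · exact absurd heq hune
    · by_cases hux : u = x
      · subst hux; exact hgt
      · exact hx.2.2.2 u hvu hpre hux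

end Stmt14Prob


/-- (Decomposition of a random tree with i.i.d. offspring of finite
expectation into finite subtrees.) -/
theorem stmt14 {Ω : Type*} [MeasurableSpace Ω] (P : MeasureTheory.Measure Ω)
    [MeasureTheory.IsProbabilityMeasure P]
    (X : List ℕ → Ω → ℕ) (hmeas : ∀ w, Measurable (X w))
    (hindep : ProbabilityTheory.iIndepFun X P)
    (hident : ∀ w, ProbabilityTheory.IdentDistrib (X w) (X []) P P)
    (hexp : (∫⁻ ω, (X [] ω : ℝ≥0∞) ∂P) < ⊤)
 :
    ∀ᵐ ω ∂P, ∃ M : ℕ, 1 ≤ M ∧ ∃ Vi : ℕ → Set (List ℕ),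
      (∀ i, Vi i ⊆ randomTreeVertices X ω) ∧
      (∀ i j, i ≠ j → Disjoint (Vi i) (Vi j)) ∧
      (⋃ i, Vi i) = randomTreeVertices X ω ∧
      (∀ i, (Vi i).Finite) ∧
      (∀ i, ((randomTreeGraph X ω).induce (Vi i)).Preconnected) ∧
      (∀ i, ∀ x ∈ Vi i,
        (∀ a : ℕ, x ++ [a] ∈ randomTreeVertices X ω → x ++ [a] ∉ Vi i) →
        randomTreeOff X ω x ≤ M) := by
  obtain ⟨M, hM1, hq⟩ := exists_stmtM P X hmeas hexp
  filter_upwards [ae_stmtCluster_finite P X hmeas hindep hident hq] with ω hfin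
  exact ⟨M, hM1, stmt14_det X ω M hM1 hfin⟩
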